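/- The character of W(Λ_r) at weight α = n_1γ_1 + ... + n_ℓγ_ℓ, defined as χ^α(q) = Σ_i q^i · #{configurations of weight α and degree i satisfying difference and initial conditions}, satisfies the q-series identity χ^α(q) = q^{N(α,r)}/((q)_{n_1}···(q)_{n_ℓ}) where N(α,r) = Σ n_i² + Σ_{i<j} n_i n_j + Σ_{i=1}^r n_i, and in particular χ^α(q) · ∏_{j=1}^ℓ (q)_{n_j} = q^{N(α,r)}. -/

import Mathlib

open Finset PowerSeries

lemma geomInv (w : ℕ) (hw : 1 ≤ w) :
    ((1 : PowerSeries ℚ) - X ^ w)⁻¹ = PowerSeries.mk (fun d => if w ∣ d then 1 else 0) := by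
  have hc : constantCoeff (R := ℚ) (1 - X ^ w) ≠ 0 := by
    simp [zero_pow (by omega : w ≠ 0)]
  rw [PowerSeries.inv_eq_iff_mul_eq_one hc]
  ext d
  rw [mul_sub, mul_one, map_sub, PowerSeries.coeff_mul_X_pow']
  simp only [PowerSeries.coeff_mk, PowerSeries.coeff_one]
  by_cases hd : d = 0
  · subst hd; simp [(by omega : ¬ w ≤ 0)]; omega
  · simp only [hd, if_false]
    by_cases hle : w ≤ d
    · have : w ∣ d ↔ w ∣ d - w := by
        constructor
        · intro h; exact (Nat.dvd_sub h dvd_rfl)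
        · intro h; have := Nat.dvd_add h dvd_rfl; rwa [Nat.sub_add_cancel hle] at this
      simp only [if_pos hle, ← this, sub_self]
    · have : ¬ w ∣ d := fun h => hle (Nat.le_of_dvd (by omega) h)
      simp [hle, this]


lemma cardFilterEq {ι : Type*} [Fintype ι] [DecidableEq ι] (w : ι → ℕ) (hw : ∀ i, 1 ≤ w i) (d : ℕ) :
    (((univ : Finset ι).finsuppAntidiag d).filter (fun l => ∀ i, w i ∣ l i)).card
      = Nat.card {b : ι → ℕ // ∑ i, w i * b i = d} := by
  rw [← Nat.card_eq_finsetCard]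
  apply Nat.card_congr
  refine ⟨fun l => ⟨fun i => l.1 i / w i, ?_⟩, fun b => ⟨Finsupp.equivFunOnFinite.symm (fun i => w i * b.1 i), ?_⟩, ?_, ?_⟩
  · obtain ⟨l, hl⟩ := l
    simp only [mem_filter, mem_finsuppAntidiag] at hl
    obtain ⟨⟨hsum, -⟩, hdvd⟩ := hl
    calc ∑ i, w i * (l i / w i) = ∑ i, l i := by
          refine Finset.sum_congr rfl fun i _ => Nat.mul_div_cancel' (hdvd i)
      _ = d := hsum
  · obtain ⟨b, hb⟩ := b
    simp only [mem_filter, mem_finsuppAntidiag]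
    refine ⟨⟨?_, subset_univ _⟩, fun i => ⟨b i, by simp⟩⟩
    simpa using hb
  · rintro ⟨l, hl⟩
    simp only [mem_filter, mem_finsuppAntidiag] at hl
    apply Subtype.ext
    apply Finsupp.ext
    intro i
    simp [Nat.mul_div_cancel' (hl.2 i)]
  · rintro ⟨b, hb⟩
    apply Subtype.ext
    funext i
    simp [Nat.mul_div_cancel_left _ (by have := hw i; omega : 0 < w i)]

lemma countProd {ι : Type*} [Fintype ι] [DecidableEq ι] (w : ι → ℕ) (hw : ∀ i, 1 ≤ w i) :
    ∏ i, ((1 : PowerSeries ℚ) - X ^ w i)⁻¹ =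
      PowerSeries.mk (fun d => (Nat.card {b : ι → ℕ // ∑ i, w i * b i = d} : ℚ)) := by
  have : ∀ i : ι, ((1 : PowerSeries ℚ) - X ^ w i)⁻¹
      = PowerSeries.mk (fun d => if w i ∣ d then 1 else 0) := fun i => geomInv (w i) (hw i)
  simp_rw [this]
  ext d
  rw [PowerSeries.coeff_prod]
  simp only [PowerSeries.coeff_mk]
  rw [← cardFilterEq w hw d]
  classical
  calc (∑ l ∈ (univ : Finset ι).finsuppAntidiag d,
          ∏ i, (if w i ∣ l i then (1:ℚ) else 0))
      = ∑ l ∈ (univ : Finset ι).finsuppAntidiag d,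
          (if ∀ i, w i ∣ l i then (1:ℚ) else 0) := by
        refine Finset.sum_congr rfl fun l _ => ?_
        rw [Finset.prod_boole]
        simp
    _ = _ := by rw [Finset.sum_boole]




section OneColor
variable {N : ℕ}

def sumTo (c : Fin N → ℕ) (v : ℕ) : ℕ :=
  ∑ l ∈ univ.filter (fun l : Fin N => (l : ℕ) ≤ v), c l

lemma sumTo_zero (c : Fin N → ℕ) (h : 0 < N) : sumTo c 0 = c ⟨0, h⟩ := by
  unfold sumTo
  rw [show univ.filter (fun l : Fin N => (l : ℕ) ≤ 0) = {⟨0, h⟩} by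
    ext l; simp [Fin.ext_iff, Nat.le_zero]]
  simp

lemma sumTo_succ (c : Fin N → ℕ) (v : ℕ) (h : v + 1 < N) :
    sumTo c (v + 1) = sumTo c v + c ⟨v + 1, h⟩ := by
  unfold sumTo
  rw [show univ.filter (fun l : Fin N => (l : ℕ) ≤ v + 1)
      = insert ⟨v + 1, h⟩ (univ.filter (fun l : Fin N => (l : ℕ) ≤ v)) by
    ext l; simp [Fin.ext_iff]; omega]
  rw [Finset.sum_insert (by simp)]
  omega

lemma sumTo_mono (c : Fin N → ℕ) {u v : ℕ} (h : u ≤ v) : sumTo c u ≤ sumTo c v := by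
  apply Finset.sum_le_sum_of_subset
  intro l hl
  simp only [mem_filter, mem_univ, true_and] at *
  omega

def reconOne (a : ℕ) (c : Fin N → ℕ) (k : Fin N) : ℕ := a + 2 * k + sumTo c k

def difOne (a : ℕ) (m : Fin N → ℕ) (k : Fin N) : ℕ :=
  if h : (k : ℕ) = 0 then m k - a
  else m k - m ⟨(k : ℕ) - 1, by omega⟩ - 2

lemma reconOne_difOne {a : ℕ} {m : Fin N → ℕ}
    (h0 : ∀ k : Fin N, (k : ℕ) = 0 → a ≤ m k)
    (hg : ∀ k l : Fin N, (k : ℕ) + 1 = (l : ℕ) → m k + 2 ≤ m l) (k : Fin N) :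
    reconOne a (difOne a m) k = m k := by
  obtain ⟨v, hv⟩ := k
  induction v with
  | zero =>
      have h := h0 ⟨0, hv⟩ rfl
      simp only [reconOne, sumTo_zero _ hv, difOne]
      simp
      omega
  | succ v ih =>
      have hv' : v < N := by omega
      have hgap := hg ⟨v, hv'⟩ ⟨v + 1, hv⟩ rfl
      have ihv := ih hv'
      simp only [reconOne, sumTo_succ _ v hv] at *
      have hd : difOne a m ⟨v + 1, hv⟩ = m ⟨v + 1, hv⟩ - m ⟨v, hv'⟩ - 2 := by
        simp only [difOne]
        rfl
      rw [hd]
      omega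

lemma difOne_reconOne (a : ℕ) (c : Fin N → ℕ) (k : Fin N) :
    difOne a (reconOne a c) k = c k := by
  obtain ⟨v, hv⟩ := k
  match v with
  | 0 =>
      simp only [difOne, reconOne]
      simp [sumTo_zero _ hv]
  | v + 1 =>
      have hv' : v < N := by omega
      have : difOne a (reconOne a c) ⟨v + 1, hv⟩
          = reconOne a c ⟨v + 1, hv⟩ - reconOne a c ⟨v, hv'⟩ - 2 := by
        simp only [difOne]; rfl
      rw [this]
      simp only [reconOne, sumTo_succ _ v hv]
      have := sumTo_mono c (Nat.le_succ v)
      omega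

lemma reconOne_gap (a : ℕ) (c : Fin N → ℕ) (k l : Fin N) (h : (k : ℕ) + 1 = (l : ℕ)) :
    reconOne a c k + 2 ≤ reconOne a c l := by
  simp only [reconOne]
  have := sumTo_mono c (show (k : ℕ) ≤ (l : ℕ) by omega)
  omega

lemma card_ge (N v : ℕ) : ((univ : Finset (Fin N)).filter (fun k : Fin N => v ≤ (k : ℕ))).card = N - v := by
  by_cases h : v < N
  · have : (univ : Finset (Fin N)).filter (fun k : Fin N => v ≤ (k : ℕ))
        = Finset.Ici (⟨v, h⟩ : Fin N) := by
      ext k; simp [Fin.le_def]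
    rw [this, Fin.card_Ici]
  · have : (univ : Finset (Fin N)).filter (fun k : Fin N => v ≤ (k : ℕ)) = ∅ := by
      ext k
      simp only [mem_filter, mem_univ, true_and, Finset.notMem_empty, iff_false]
      have := k.isLt; omega
    rw [this]; simp; omega

lemma sum_reconOne (a : ℕ) (c : Fin N → ℕ) :
    ∑ k, reconOne a c k = N * a + N * (N - 1) + ∑ k : Fin N, (N - (k : ℕ)) * c k := by
  unfold reconOne sumTo
  rw [Finset.sum_add_distrib, Finset.sum_add_distrib]
  congr 1
  · congr 1
    · simp [Finset.sum_const, mul_comm]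
    · rw [← Finset.mul_sum, Fin.sum_univ_eq_sum_range (fun k => k), mul_comm,
        Finset.sum_range_id_mul_two]
  · have hcomm := Finset.sum_comm' (s := (univ : Finset (Fin N)))
      (t := fun k : Fin N => univ.filter (fun l : Fin N => (l : ℕ) ≤ (k : ℕ)))
      (t' := (univ : Finset (Fin N)))
      (s' := fun l : Fin N => univ.filter (fun k : Fin N => (l : ℕ) ≤ (k : ℕ)))
      (f := fun _ l => c l)
      (by intro x y; simp only [mem_filter, mem_univ, true_and]; tauto)
    rw [hcomm]
    apply Finset.sum_congr rfl
    intro l _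
    rw [Finset.sum_const, smul_eq_mul, card_ge]

end OneColor

/-- The number of configurations of weight `(n_1, …, n_ℓ)` and degree `d`:
for each color `j` a strictly increasing sequence `m_{j,1} < ⋯ < m_{j,n_j}` of
positive integers with `m_{j,1} ≥ 1 + Σ_{i<j} n_i + δ_{j≤r}` and gaps
`m_{j,k+1} - m_{j,k} ≥ 2`, of total sum `d`. -/
noncomputable def configCount (ℓ r : ℕ) (n : Fin ℓ → ℕ) (d : ℕ) : ℕ :=
  Nat.card {m : (j : Fin ℓ) → Fin (n j) → ℕ //
    (∀ j k, 1 ≤ m j k) ∧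
    (∀ (j : Fin ℓ) (k : Fin (n j)), (k : ℕ) = 0 →
      1 + (∑ i ∈ Finset.univ.filter (· < j), n i) +
        (if (j : ℕ) + 1 ≤ r then 1 else 0) ≤ m j k) ∧
    (∀ (j : Fin ℓ) (k l : Fin (n j)), (k : ℕ) + 1 = (l : ℕ) → m j k + 2 ≤ m j l) ∧
    ∑ j, ∑ k, m j k = d}

/-- The character of `W(Λ_r)` at weight `α = n_1γ_1 + ⋯ + n_ℓγ_ℓ`:
`χ^α(q) = Σ_d (#configurations of weight α and degree d) q^d`. -/
noncomputable def chiW (ℓ r : ℕ) (n : Fin ℓ → ℕ) : PowerSeries ℚ :=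
  PowerSeries.mk fun d => (configCount ℓ r n d : ℚ)

section Main
variable (ℓ r : ℕ) (n : Fin ℓ → ℕ)

def Abase (j : Fin ℓ) : ℕ :=
  1 + (∑ i ∈ Finset.univ.filter (· < j), n i) + (if (j : ℕ) + 1 ≤ r then 1 else 0)

def Nbig : ℕ :=
  (∑ i, n i ^ 2) + (∑ j, ∑ i ∈ Finset.univ.filter (· < j), n i * n j) +
    (∑ i ∈ Finset.univ.filter (fun i : Fin ℓ => (i : ℕ) + 1 ≤ r), n i)

lemma NbigEq : ∑ j, (n j * Abase ℓ r n j + n j * (n j - 1)) = Nbig ℓ r n := by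
  have point : ∀ a S t : ℕ, a * (1 + S + t) + a * (a - 1) = a ^ 2 + S * a + t * a := by
    intro a S t
    cases a with
    | zero => simp
    | succ b => simp only [Nat.succ_sub_one]; ring
  unfold Abase Nbig
  rw [Finset.sum_congr rfl (fun j _ => point (n j) _ _)]
  rw [Finset.sum_add_distrib, Finset.sum_add_distrib]
  congr 1
  · congr 1
    exact Finset.sum_congr rfl (fun j _ => Finset.sum_mul ..)
  · rw [Finset.sum_filter]
    exact Finset.sum_congr rfl (fun j _ => by split <;> simp

)

lemma sum_recon_eq (c : (j : Fin ℓ) → Fin (n j) → ℕ) :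
    ∑ j, ∑ k, reconOne (Abase ℓ r n j) (c j) k
      = Nbig ℓ r n + ∑ j, ∑ k : Fin (n j), (n j - (k : ℕ)) * c j k := by
  rw [Finset.sum_congr rfl (fun j _ => sum_reconOne (Abase ℓ r n j) (c j))]
  rw [Finset.sum_add_distrib, NbigEq]

lemma configCount_eq (d : ℕ) :
    configCount ℓ r n d = Nat.card {c : (j : Fin ℓ) → Fin (n j) → ℕ //
      Nbig ℓ r n + ∑ j, ∑ k : Fin (n j), (n j - (k : ℕ)) * c j k = d} := by
  unfold configCount
  apply Nat.card_congr
  refine ⟨fun m => ⟨fun j => difOne (Abase ℓ r n j) (m.1 j), ?_⟩,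
         fun c => ⟨fun j => reconOne (Abase ℓ r n j) (c.1 j), ?_, ?_, ?_, ?_⟩, ?_, ?_⟩
  · obtain ⟨m, h1, h0, hg, hs⟩ := m
    have hm : ∀ j k, reconOne (Abase ℓ r n j) (difOne (Abase ℓ r n j) (m j)) k = m j k :=
      fun j k => reconOne_difOne (h0 j) (hg j) k
    show Nbig ℓ r n + ∑ j, ∑ k : Fin (n j), (n j - (k : ℕ)) * difOne (Abase ℓ r n j) (m j) k = d
    rw [← sum_recon_eq, ← hs]
    exact Finset.sum_congr rfl fun j _ => Finset.sum_congr rfl fun k _ => hm j k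
  · intro j k
    simp only [reconOne, Abase]
    omega
  · intro j k _
    simp only [reconOne, Abase]
    omega
  · intro j k l h
    exact reconOne_gap _ _ k l h
  · rw [sum_recon_eq]
    exact c.2
  · rintro ⟨m, h1, h0, hg, hs⟩
    apply Subtype.ext
    funext j k
    exact reconOne_difOne (h0 j) (hg j) k
  · rintro ⟨c, hc⟩
    apply Subtype.ext
    funext j k
    exact difOne_reconOne _ _ k

lemma configCount_eq_sigma (d : ℕ) :
    configCount ℓ r n d = Nat.card {b : (Σ j : Fin ℓ, Fin (n j)) → ℕ //
      Nbig ℓ r n + ∑ i : Σ j : Fin ℓ, Fin (n j), (n i.1 - (i.2 : ℕ)) * b i = d} := by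
  rw [configCount_eq]
  apply Nat.card_congr
  refine Equiv.subtypeEquiv (Equiv.piCurry fun _ _ => ℕ).symm ?_
  intro c
  have : ∑ i : Σ j : Fin ℓ, Fin (n j), (n i.1 - (i.2 : ℕ)) * c i.1 i.2
      = ∑ j, ∑ k : Fin (n j), (n j - (k : ℕ)) * c j k := by
    rw [← Finset.univ_sigma_univ, Finset.sum_sigma]
  rw [← this]
  rfl

end Main


/-- `χ^α(q) = q^{N(α,r)} / ((q)_{n_1} ⋯ (q)_{n_ℓ})`, and in particular
`χ^α(q) ⋅ ∏_j (q)_{n_j} = q^{N(α,r)}`, where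
`N(α,r) = Σ n_i² + Σ_{i<j} n_i n_j + Σ_{i=1}^r n_i`. -/
theorem character_formula (ℓ r : ℕ) (hr : r ≤ ℓ) (n : Fin ℓ → ℕ) :
    chiW ℓ r n =
      (X : PowerSeries ℚ) ^
          ((∑ i, n i ^ 2) +
           (∑ j, ∑ i ∈ Finset.univ.filter (· < j), n i * n j) +
           (∑ i ∈ Finset.univ.filter (fun i : Fin ℓ => (i : ℕ) + 1 ≤ r), n i)) *
        (∏ j, ∏ k ∈ Finset.range (n j), (1 - (X : PowerSeries ℚ) ^ (k + 1)))⁻¹ ∧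
    chiW ℓ r n * (∏ j, ∏ k ∈ Finset.range (n j), (1 - (X : PowerSeries ℚ) ^ (k + 1))) =
      (X : PowerSeries ℚ) ^
          ((∑ i, n i ^ 2) +
           (∑ j, ∑ i ∈ Finset.univ.filter (· < j), n i * n j) +
           (∑ i ∈ Finset.univ.filter (fun i : Fin ℓ => (i : ℕ) + 1 ≤ r), n i)) := by
  classical
  have hNbig :
      ((∑ i, n i ^ 2) +
       (∑ j, ∑ i ∈ Finset.univ.filter (· < j), n i * n j) +
       (∑ i ∈ Finset.univ.filter (fun i : Fin ℓ => (i : ℕ) + 1 ≤ r), n i)) = Nbig ℓ r n := rfl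
  rw [hNbig]
  set ι := Σ j : Fin ℓ, Fin (n j) with hι
  set w : ι → ℕ := fun i => n i.1 - (i.2 : ℕ) with hwdef
  have hw : ∀ i, 1 ≤ w i := fun i => by have := i.2.isLt; simp only [hwdef]; omega
  have hP : (∏ j, ∏ k ∈ Finset.range (n j), (1 - (X : PowerSeries ℚ) ^ (k + 1)))
      = ∏ i : ι, (1 - (X : PowerSeries ℚ) ^ w i) := by
    rw [← Finset.univ_sigma_univ, Finset.prod_sigma]
    apply Finset.prod_congr rfl
    intro j _
    rw [Fin.prod_univ_eq_prod_range (fun k => 1 - (X : PowerSeries ℚ) ^ (n j - k))]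
    rw [← Finset.prod_range_reflect (fun k => 1 - (X : PowerSeries ℚ) ^ (k + 1))]
    apply Finset.prod_congr rfl
    intro k hk
    simp only [Finset.mem_range] at hk
    congr 2
    omega
  have hCi : ∀ i : ι, constantCoeff (R := ℚ) (1 - X ^ w i) ≠ 0 := by
    intro i
    rw [map_sub, map_one, map_pow, constantCoeff_X, zero_pow (by have := hw i; omega)]
    simp
  have hC : constantCoeff (R := ℚ) (∏ i : ι, (1 - X ^ w i)) ≠ 0 := by
    rw [map_prod]
    rw [Finset.prod_congr rfl (fun i _ => show constantCoeff (R := ℚ) (1 - X ^ w i) = 1 by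
      rw [map_sub, map_one, map_pow, constantCoeff_X, zero_pow (by have := hw i; omega)]; simp)]
    simp
  have hcfg : ∀ d : ℕ, (configCount ℓ r n d : ℚ)
      = if Nbig ℓ r n ≤ d
        then (Nat.card {b : ι → ℕ // ∑ i, w i * b i = d - Nbig ℓ r n} : ℚ) else 0 := by
    intro d
    rw [configCount_eq_sigma]
    split
    · next h =>
        congr 1
        apply Nat.card_congr
        refine Equiv.subtypeEquivRight (q := fun b : ι → ℕ =>
          ∑ i, w i * b i = d - Nbig ℓ r n) (fun b => ?_)
        show Nbig ℓ r n + ∑ i : ι, w i * b i = d ↔ ∑ i : ι, w i * b i = d - Nbig ℓ r n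
        omega
    · next h =>
        norm_cast
        have : IsEmpty {b : ι → ℕ //
            Nbig ℓ r n + ∑ i : ι, (n i.1 - (i.2 : ℕ)) * b i = d} := ⟨fun b => by
          have := b.2; omega⟩
        exact Nat.card_of_isEmpty
  have h1 : chiW ℓ r n = X ^ Nbig ℓ r n * ∏ i : ι, ((1 : PowerSeries ℚ) - X ^ w i)⁻¹ := by
    rw [countProd w hw, mul_comm]
    ext d
    rw [PowerSeries.coeff_mul_X_pow']
    simp only [chiW, PowerSeries.coeff_mk]
    rw [hcfg d]
  have hinv : (∏ i : ι, ((1 : PowerSeries ℚ) - X ^ w i)⁻¹)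
      = (∏ i : ι, ((1 : PowerSeries ℚ) - X ^ w i))⁻¹ := by
    rw [PowerSeries.eq_inv_iff_mul_eq_one hC, ← Finset.prod_mul_distrib]
    rw [Finset.prod_congr rfl (fun i _ => show ((1 : PowerSeries ℚ) - X ^ w i)⁻¹ *
        (1 - X ^ w i) = 1 by rw [mul_comm]; exact PowerSeries.mul_inv_cancel _ (hCi i))]
    simp
  have hPinv : (∏ i : ι, ((1 : PowerSeries ℚ) - X ^ w i))⁻¹ *
      (∏ i : ι, ((1 : PowerSeries ℚ) - X ^ w i)) = 1 := by
    rw [mul_comm]; exact PowerSeries.mul_inv_cancel _ hC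
  constructor
  · rw [hP, h1, hinv]
  · rw [hP, h1, hinv, mul_assoc, hPinv, mul_one]
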